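/- Let κ be measurable with κ-complete ultrafilter D, μ < κ a cardinal, and P a μ-cc poset. Then the ultrapower P^κ/D is also μ-cc. -/

import Mathlib

open Cardinal

/-- `D` is `κ`-complete. -/
def IsKappaComplete {ι : Type*} (D : Ultrafilter ι) (κ : Cardinal) : Prop :=
  ∀ S : Set (Set ι), #S < κ → (∀ A ∈ S, A ∈ D) → ⋂₀ S ∈ D

/-- Compatibility in a poset. -/
def Compat {P : Type*} [Preorder P] (p q : P) : Prop := ∃ r, r ≤ p ∧ r ≤ q

/-- Antichain. -/
def IsAntichainP {P : Type*} [Preorder P] (A : Set P) : Prop :=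
  ∀ p ∈ A, ∀ q ∈ A, p ≠ q → ¬ Compat p q

theorem ultrapower_cc
    {ι : Type} (D : Ultrafilter ι)
    (hmeas : ℵ₀ < #ι)
    (hnp : ∀ x : ι, D ≠ pure x)
    (hcomplete : IsKappaComplete D #ι)
    (μ : Cardinal) (hμ : μ < #ι)
    (P : Type) [Preorder P]
    -- P is μ-cc: every antichain of P has size < μ
    (hcc : ∀ A : Set P, IsAntichainP A → #A < μ) :
    -- the ultrapower P^κ/D is μ-cc
    ∀ B : Set (Filter.Germ (D : Filter ι) P), IsAntichainP B → #B < μ := by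
  classical
  have hμ0 : 0 < μ := by
    have := hcc ∅ (by intro p hp; simp at hp)
    simpa using lt_of_le_of_lt zero_le this
  intro B hB
  by_contra hle
  push_neg at hle
  -- get a μ-sized injective family in B
  rw [← Cardinal.mk_out μ] at hle
  obtain ⟨j⟩ := hle
  -- choose representatives
  have hrep : ∀ g : Filter.Germ (D : Filter ι) P, ∃ f : ι → P,
      (f : Filter.Germ (D : Filter ι) P) = g := fun g => Quotient.exists_rep g
  choose f hf using fun x : μ.out => hrep (j x)
  -- compatibility transfers
  have key : ∀ u v : ι → P,
      ¬ Compat (u : Filter.Germ (D : Filter ι) P) (v : Filter.Germ (D : Filter ι) P) →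
      {α | ¬ Compat (u α) (v α)} ∈ D := by
    intro u v hnc
    rw [show {α | ¬ Compat (u α) (v α)} = {α | Compat (u α) (v α)}ᶜ from rfl,
      Ultrafilter.compl_mem_iff_notMem]
    intro h
    apply hnc
    refine ⟨(fun α => if h : Compat (u α) (v α) then h.choose else u α : ι → P), ?_, ?_⟩ <;>
      rw [Filter.Germ.coe_le] <;>
      filter_upwards [h] with α hα <;> simp only [dif_pos hα]
    · exact hα.choose_spec.1
    · exact hα.choose_spec.2
  have hpair : ∀ x y : μ.out, x ≠ y → {α | ¬ Compat (f x α) (f y α)} ∈ D := by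
    intro x y hxy
    apply key
    rw [hf x, hf y]
    exact hB _ ((j x).2) _ ((j y).2) (fun h => hxy (j.injective (Subtype.ext h)))
  -- the family of D-sets
  set S : Set (Set ι) := {A | ∃ x y : μ.out, x ≠ y ∧ A = {α | ¬ Compat (f x α) (f y α)}}
    with hS
  have hScard : #S < #ι := by
    have h1 : #S ≤ #(μ.out × μ.out) := by
      have : S ⊆ Set.range (fun p : μ.out × μ.out => {α | ¬ Compat (f p.1 α) (f p.2 α)}) := by
        rintro A ⟨x, y, -, rfl⟩; exact ⟨(x, y), rfl⟩
      exact (Cardinal.mk_le_mk_of_subset this).trans Cardinal.mk_range_le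
    have h2 : #(μ.out × μ.out) = μ * μ := by simp [Cardinal.mk_out]
    calc #S ≤ μ * μ := by rw [← h2]; exact h1
      _ < #ι := Cardinal.mul_lt_of_lt hmeas.le hμ hμ
  have hSD : ⋂₀ S ∈ D := hcomplete S hScard (by rintro A ⟨x, y, hxy, rfl⟩; exact hpair x y hxy)
  obtain ⟨α, hα⟩ := Filter.nonempty_of_mem (D.toFilter.sets_of_superset hSD (fun a ha => ha))
  -- build an antichain of size μ in P
  have hinj : Function.Injective (fun x : μ.out => f x α) := by
    intro x y hxy
    by_contra hne
    have hmem : α ∈ {β | ¬ Compat (f x β) (f y β)} :=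
      hα _ ⟨x, y, hne, rfl⟩
    simp only at hxy
    exact hmem ⟨f x α, le_refl _, hxy ▸ le_refl _⟩
  have hanti : IsAntichainP (Set.range (fun x : μ.out => f x α)) := by
    rintro p ⟨x, rfl⟩ q ⟨y, rfl⟩ hpq
    have hxy : x ≠ y := fun h => hpq (by rw [h])
    exact hα _ ⟨x, y, hxy, rfl⟩
  have := hcc _ hanti
  rw [Cardinal.mk_range_eq _ hinj, Cardinal.mk_out] at this
  exact lt_irrefl μ this
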